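/- Let π be a Borel probability measure on ℝ, and let G ∼ N(0,1) be independent of V ∼ π. For any Borel measurable loss function ψ : ℝ² → [0,∞), the map ρ ↦ R_{π,ψ}(ρ) := inf_g E[ψ(g(√ρ V + G), V)], where the infimum is over all Borel measurable functions g : ℝ → ℝ, is non-increasing on [0,∞). Moreover, if ψ(x,y) = Ψ(x − y) for some convex function Ψ : ℝ → [0,∞) with Ψ(u) → ∞ as |u| → ∞, then for every ρ ∈ [0,∞) the infimum defining R_{π,ψ}(ρ) is attained by some Borel measurable g : ℝ → ℝ. -/

import Mathlib

open MeasureTheory ProbabilityTheory Filter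
open scoped ENNReal NNReal

namespace BayesRiskAux

noncomputable def risk (π : Measure ℝ) (ψ : ℝ → ℝ → ℝ) (ρ : ℝ) (g : ℝ → ℝ) : ℝ≥0∞ :=
  ∫⁻ q, ENNReal.ofReal (ψ (g (Real.sqrt ρ * q.1 + q.2)) q.1) ∂(π.prod (gaussianReal 0 1))

lemma pdf_symm {a b : ℝ} (hab : a^2 + b^2 = 1) (u x : ℝ) :
    gaussianPDFReal 0 1 u * gaussianPDFReal (a*u) (NNReal.mk (b^2) (sq_nonneg b)) x
      = gaussianPDFReal 0 1 x * gaussianPDFReal (a*x) (NNReal.mk (b^2) (sq_nonneg b)) u := by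
  by_cases hb : b = 0
  · subst hb
    have : NNReal.mk ((0:ℝ)^2) (sq_nonneg 0) = 0 := by ext; simp
    rw [this]
    simp only [gaussianPDFReal_zero_var, Pi.zero_apply, mul_zero, zero_mul]
  · simp only [gaussianPDFReal, NNReal.coe_mk, NNReal.coe_one]
    have hb2 : b^2 ≠ 0 := by positivity
    have hexp : Real.exp (-(u-0)^2/(2*1)) * Real.exp (-(x-a*u)^2/(2*b^2))
        = Real.exp (-(x-0)^2/(2*1)) * Real.exp (-(u-a*x)^2/(2*b^2)) := by
      rw [← Real.exp_add, ← Real.exp_add]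
      congr 1
      field_simp
      linear_combination (x^2 - u^2) * hab
    rw [mul_mul_mul_comm, mul_mul_mul_comm ((Real.sqrt (2*Real.pi*1))⁻¹)
      (Real.exp (-(x-0)^2/(2*1))), hexp]

lemma gaussianPDF_shift (μ : ℝ) (v : ℝ≥0) (x : ℝ) :
    gaussianPDF μ v x = gaussianPDF 0 v (x - μ) := by
  simp [gaussianPDF, gaussianPDFReal, sub_zero]

lemma lintegral_pdf_comb {a b : ℝ} (hb : b ≠ 0) (hab : a^2 + b^2 = 1) (x : ℝ) :
    ∫⁻ u, gaussianPDF 0 1 u * gaussianPDF (a*u) (NNReal.mk (b^2) (sq_nonneg b)) x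
      = gaussianPDF 0 1 x := by
  have hvb : ((NNReal.mk (b^2) (sq_nonneg b)) : ℝ≥0) ≠ 0 := by
    intro h
    have h2 := congrArg NNReal.toReal h
    simp only [NNReal.coe_mk, NNReal.coe_zero] at h2
    exact pow_ne_zero 2 hb h2
  calc ∫⁻ u, gaussianPDF 0 1 u * gaussianPDF (a*u) (NNReal.mk (b^2) (sq_nonneg b)) x
      = ∫⁻ u, gaussianPDF 0 1 x * gaussianPDF (a*x) (NNReal.mk (b^2) (sq_nonneg b)) u := by
        congr 1 with u
        simp only [gaussianPDF, ← ENNReal.ofReal_mul (gaussianPDFReal_nonneg 0 1 u),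
          ← ENNReal.ofReal_mul (gaussianPDFReal_nonneg 0 1 x)]
        rw [pdf_symm hab]
    _ = gaussianPDF 0 1 x * ∫⁻ u, gaussianPDF (a*x) (NNReal.mk (b^2) (sq_nonneg b)) u :=
        lintegral_const_mul _ (measurable_gaussianPDF _ _)
    _ = gaussianPDF 0 1 x := by rw [lintegral_gaussianPDF_eq_one _ hvb, mul_one]

lemma gaussian_comb {a b : ℝ} (hb : b ≠ 0) (hab : a^2 + b^2 = 1) :
    ((gaussianReal 0 1).prod (gaussianReal 0 1)).map (fun p : ℝ × ℝ => a * p.1 + b * p.2)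
      = gaussianReal 0 1 := by
  have hvb : ((NNReal.mk (b^2) (sq_nonneg b)) : ℝ≥0) ≠ 0 := by
    intro h
    have h2 := congrArg NNReal.toReal h
    simp only [NNReal.coe_mk, NNReal.coe_zero] at h2
    exact pow_ne_zero 2 hb h2
  have hfm : Measurable (fun p : ℝ × ℝ => a * p.1 + b * p.2) :=
    (measurable_fst.const_mul a).add (measurable_snd.const_mul b)
  have hmap1 : ∀ u : ℝ, (gaussianReal 0 1).map (fun w => a * u + b * w)
      = gaussianReal (a * u) (NNReal.mk (b^2) (sq_nonneg b)) := by
    intro u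
    have : (fun w : ℝ => a * u + b * w) = (fun x : ℝ => a * u + x) ∘ (fun w : ℝ => b * w) := rfl
    rw [this, ← Measure.map_map (measurable_const_add _) (measurable_const_mul _),
      gaussianReal_map_const_mul b, gaussianReal_map_const_add (a*u)]
    norm_num
  ext s hs
  rw [Measure.map_apply hfm hs, Measure.prod_apply (hfm hs)]
  have h1 : ∀ u : ℝ, gaussianReal 0 1 (Prod.mk u ⁻¹' ((fun p : ℝ × ℝ => a * p.1 + b * p.2) ⁻¹' s))
      = ∫⁻ x in s, gaussianPDF (a*u) (NNReal.mk (b^2) (sq_nonneg b)) x := by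
    intro u
    have h2 : Prod.mk u ⁻¹' ((fun p : ℝ × ℝ => a * p.1 + b * p.2) ⁻¹' s)
        = (fun w => a * u + b * w) ⁻¹' s := rfl
    rw [h2, ← Measure.map_apply ((measurable_const_mul b).const_add _) hs, hmap1 u,
      gaussianReal_apply _ hvb]
  simp_rw [h1]
  have hmeas2 : Measurable (fun q : ℝ × ℝ => gaussianPDF (a * q.1) (NNReal.mk (b^2) (sq_nonneg b)) q.2) := by
    have he : (fun q : ℝ × ℝ => gaussianPDF (a * q.1) (NNReal.mk (b^2) (sq_nonneg b)) q.2)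
        = fun q : ℝ × ℝ => gaussianPDF 0 (NNReal.mk (b^2) (sq_nonneg b)) (q.2 - a * q.1) :=
      funext fun q => gaussianPDF_shift _ _ _
    rw [he]
    exact (measurable_gaussianPDF 0 _).comp (measurable_snd.sub (measurable_fst.const_mul a))
  have hmeasint : Measurable (fun u : ℝ => ∫⁻ x in s, gaussianPDF (a*u) (NNReal.mk (b^2) (sq_nonneg b)) x) :=
    Measurable.lintegral_prod_right' (f := fun q : ℝ × ℝ =>
      gaussianPDF (a * q.1) (NNReal.mk (b^2) (sq_nonneg b)) q.2) hmeas2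
  calc ∫⁻ u, (∫⁻ x in s, gaussianPDF (a*u) (NNReal.mk (b^2) (sq_nonneg b)) x) ∂(gaussianReal 0 1)
      = ∫⁻ u, gaussianPDF 0 1 u * ∫⁻ x in s, gaussianPDF (a*u) (NNReal.mk (b^2) (sq_nonneg b)) x := by
        rw [gaussianReal_of_var_ne_zero 0 one_ne_zero,
          lintegral_withDensity_eq_lintegral_mul volume (measurable_gaussianPDF 0 1) hmeasint]
        rfl
    _ = ∫⁻ u, ∫⁻ x in s, gaussianPDF 0 1 u * gaussianPDF (a*u) (NNReal.mk (b^2) (sq_nonneg b)) x := by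
        congr 1 with u
        rw [lintegral_const_mul _ ((measurable_gaussianPDF _ _))]
    _ = ∫⁻ x in s, ∫⁻ u, gaussianPDF 0 1 u * gaussianPDF (a*u) (NNReal.mk (b^2) (sq_nonneg b)) x ∂volume := by
        refine lintegral_lintegral_swap ?_
        exact ((measurable_gaussianPDF 0 1).comp measurable_fst).mul hmeas2 |>.aemeasurable
    _ = ∫⁻ x in s, gaussianPDF 0 1 x := by simp_rw [lintegral_pdf_comb hb hab]
    _ = gaussianReal 0 1 s := (gaussianReal_apply 0 one_ne_zero s).symm

/-- Change of variables: the risk written against Lebesgue measure on the observation. -/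
lemma key_repr (π : Measure ℝ) [IsProbabilityMeasure π] (c : ℝ)
    (H : ℝ → ℝ → ℝ≥0∞) (hH : Measurable (fun p : ℝ × ℝ => H p.1 p.2)) :
    ∫⁻ q, H q.1 (c * q.1 + q.2) ∂(π.prod (gaussianReal 0 1))
      = ∫⁻ y, ∫⁻ v, H v y * gaussianPDF 0 1 (y - c * v) ∂π ∂volume := by
  have hint : Measurable (fun q : ℝ × ℝ => H q.1 (c * q.1 + q.2)) :=
    hH.comp (measurable_fst.prodMk ((measurable_fst.const_mul c).add measurable_snd))
  rw [lintegral_prod _ hint.aemeasurable]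
  have h1 : ∀ v : ℝ, ∫⁻ u, H v (c * v + u) ∂(gaussianReal 0 1)
      = ∫⁻ y, H v y * gaussianPDF 0 1 (y - c * v) ∂volume := by
    intro v
    have hHv : Measurable (H v) := hH.comp (measurable_const.prodMk measurable_id)
    have hg : Measurable fun u : ℝ => H v (c * v + u) :=
      hHv.comp (measurable_id.const_add (c * v))
    rw [gaussianReal_of_var_ne_zero 0 one_ne_zero,
      lintegral_withDensity_eq_lintegral_mul volume (measurable_gaussianPDF 0 1) hg]
    have := lintegral_add_right_eq_self
      (μ := volume) (fun y => H v y * gaussianPDF 0 1 (y - c * v)) (c * v)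
    rw [← this]
    congr 1 with u
    simp only [Pi.mul_apply, add_sub_cancel_right]
    rw [mul_comm, add_comm]
  simp_rw [h1]
  refine lintegral_lintegral_swap ?_
  refine AEMeasurable.mul ?_ ?_
  · exact (hH.comp (measurable_fst.prodMk measurable_snd)).aemeasurable
  · exact ((measurable_gaussianPDF 0 1).comp
      (measurable_snd.sub (measurable_fst.const_mul c))).aemeasurable

lemma risk_decomp (π : Measure ℝ) [IsProbabilityMeasure π]
    (ψ : ℝ → ℝ → ℝ) (hψmeas : Measurable (fun q : ℝ × ℝ => ψ q.1 q.2))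
    {g : ℝ → ℝ} (hg : Measurable g) {ρ₁ ρ₂ a b : ℝ}
    (hsq : Real.sqrt ρ₁ = a * Real.sqrt ρ₂) (hb : b ≠ 0) (hab : a^2 + b^2 = 1) :
    risk π ψ ρ₁ g = ∫⁻ w, risk π ψ ρ₂ (fun y => g (a * y + b * w)) ∂(gaussianReal 0 1) := by
  have hcomb : ((gaussianReal 0 1).prod (gaussianReal 0 1)).map
      (fun p : ℝ × ℝ => a * p.1 + b * p.2) = gaussianReal 0 1 := gaussian_comb hb hab
  set Φ : ℝ × ℝ → ℝ≥0∞ := fun p => ENNReal.ofReal (ψ (g (Real.sqrt ρ₁ * p.1 + p.2)) p.1)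
    with hΦdef
  have hΦ : Measurable Φ :=
    (hψmeas.comp ((hg.comp ((measurable_fst.const_mul _).add measurable_snd)).prodMk
      measurable_fst)).ennreal_ofReal
  have hfm : Measurable (fun p : ℝ × ℝ => a * p.1 + b * p.2) :=
    (measurable_fst.const_mul a).add (measurable_snd.const_mul b)
  have hbig : Measurable (fun q : (ℝ × ℝ) × ℝ => Φ (q.1.1, a * q.1.2 + b * q.2)) :=
    hΦ.comp ((measurable_fst.fst).prodMk
      (((measurable_fst.snd).const_mul a).add (measurable_snd.const_mul b)))
  calc risk π ψ ρ₁ g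
      = ∫⁻ v, ∫⁻ s, Φ (v, s) ∂(gaussianReal 0 1) ∂π :=
        lintegral_prod Φ hΦ.aemeasurable
    _ = ∫⁻ v, ∫⁻ p, Φ (v, a * p.1 + b * p.2)
          ∂((gaussianReal 0 1).prod (gaussianReal 0 1)) ∂π := by
        congr 1 with v
        have hΦv : Measurable fun s : ℝ => Φ (v, s) :=
          hΦ.comp (measurable_const.prodMk measurable_id)
        conv_lhs => rw [← hcomb]
        exact lintegral_map hΦv hfm
    _ = ∫⁻ v, ∫⁻ u, ∫⁻ w, Φ (v, a * u + b * w) ∂(gaussianReal 0 1) ∂(gaussianReal 0 1) ∂π := by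
        congr 1 with v
        exact lintegral_prod (fun p : ℝ × ℝ => Φ (v, a * p.1 + b * p.2))
          ((hΦ.comp (measurable_const.prodMk hfm)).aemeasurable)
    _ = ∫⁻ q, ∫⁻ w, Φ (q.1, a * q.2 + b * w) ∂(gaussianReal 0 1)
          ∂(π.prod (gaussianReal 0 1)) :=
        (lintegral_prod (fun q : ℝ × ℝ => ∫⁻ w, Φ (q.1, a * q.2 + b * w) ∂(gaussianReal 0 1))
          (Measurable.lintegral_prod_right' hbig).aemeasurable).symm
    _ = ∫⁻ w, ∫⁻ q, Φ (q.1, a * q.2 + b * w) ∂(π.prod (gaussianReal 0 1))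
          ∂(gaussianReal 0 1) :=
        lintegral_lintegral_swap hbig.aemeasurable
    _ = ∫⁻ w, risk π ψ ρ₂ (fun y => g (a * y + b * w)) ∂(gaussianReal 0 1) := by
        congr 1 with w
        rw [risk]
        congr 1 with q
        have harg : a * (Real.sqrt ρ₂ * q.1 + q.2) + b * w
            = Real.sqrt ρ₁ * q.1 + (a * q.2 + b * w) := by
          rw [hsq]; ring
        simp only [hΦdef, harg]

lemma mono_part (π : Measure ℝ) [IsProbabilityMeasure π]
    (ψ : ℝ → ℝ → ℝ) (hψmeas : Measurable (fun q : ℝ × ℝ => ψ q.1 q.2))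
    (ρ₁ ρ₂ : ℝ) (h0 : 0 ≤ ρ₁) (h12 : ρ₁ ≤ ρ₂) :
    (⨅ g : {g : ℝ → ℝ // Measurable g}, risk π ψ ρ₂ g.1)
      ≤ ⨅ g : {g : ℝ → ℝ // Measurable g}, risk π ψ ρ₁ g.1 := by
  rcases eq_or_lt_of_le h12 with rfl | hlt
  · exact le_refl _
  have hρ₂ : 0 < ρ₂ := lt_of_le_of_lt h0 hlt
  set a := Real.sqrt ρ₁ / Real.sqrt ρ₂ with hadef
  set b := Real.sqrt (1 - ρ₁/ρ₂) with hbdef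
  have hs2 : Real.sqrt ρ₂ ≠ 0 := ne_of_gt (Real.sqrt_pos.2 hρ₂)
  have hsq : Real.sqrt ρ₁ = a * Real.sqrt ρ₂ := (div_mul_cancel₀ _ hs2).symm
  have ha2 : a^2 = ρ₁/ρ₂ := by
    rw [hadef, div_pow, Real.sq_sqrt h0, Real.sq_sqrt hρ₂.le]
  have hblt : ρ₁/ρ₂ < 1 := (div_lt_one hρ₂).2 hlt
  have hb2 : b^2 = 1 - ρ₁/ρ₂ := Real.sq_sqrt (by linarith)
  have hb : b ≠ 0 := ne_of_gt (Real.sqrt_pos.2 (by linarith))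
  have hab : a^2 + b^2 = 1 := by rw [ha2, hb2]; ring
  refine le_iInf fun g => ?_
  have hdec := risk_decomp π ψ hψmeas g.2 hsq hb hab
  calc (⨅ g' : {g : ℝ → ℝ // Measurable g}, risk π ψ ρ₂ g'.1)
      = ∫⁻ _w, (⨅ g' : {g : ℝ → ℝ // Measurable g}, risk π ψ ρ₂ g'.1)
          ∂(gaussianReal 0 1) := by
        rw [lintegral_const, measure_univ, mul_one]
    _ ≤ ∫⁻ w, risk π ψ ρ₂ (fun y => g.1 (a * y + b * w)) ∂(gaussianReal 0 1) := by
        refine lintegral_mono fun w => ?_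
        exact iInf_le _ (⟨fun y => g.1 (a * y + b * w),
          g.2.comp ((measurable_id.const_mul a).add_const _)⟩ : {g : ℝ → ℝ // Measurable g})
    _ = risk π ψ ρ₁ g.1 := hdec.symm

noncomputable def Fy (π : Measure ℝ) (ψ : ℝ → ℝ → ℝ) (ρ : ℝ) (y x : ℝ) : ℝ≥0∞ :=
  ∫⁻ v, ENNReal.ofReal (ψ x v) * gaussianPDF 0 1 (y - Real.sqrt ρ * v) ∂π

lemma measurable_Fy (π : Measure ℝ) [IsProbabilityMeasure π]
    (ψ : ℝ → ℝ → ℝ) (hψmeas : Measurable (fun q : ℝ × ℝ => ψ q.1 q.2)) (ρ : ℝ) :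
    Measurable (fun p : ℝ × ℝ => Fy π ψ ρ p.1 p.2) := by
  refine Measurable.lintegral_prod_right' (f := fun q : (ℝ × ℝ) × ℝ =>
    ENNReal.ofReal (ψ q.1.2 q.2) * gaussianPDF 0 1 (q.1.1 - Real.sqrt ρ * q.2)) ?_
  refine Measurable.fun_mul ?_ ?_
  · exact (hψmeas.comp ((measurable_fst.snd).prodMk measurable_snd)).ennreal_ofReal
  · exact (measurable_gaussianPDF 0 1).comp
      ((measurable_fst.fst).sub (measurable_snd.const_mul _))

lemma risk_eq (π : Measure ℝ) [IsProbabilityMeasure π]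
    (ψ : ℝ → ℝ → ℝ) (hψmeas : Measurable (fun q : ℝ × ℝ => ψ q.1 q.2)) (ρ : ℝ)
    {g : ℝ → ℝ} (hg : Measurable g) :
    risk π ψ ρ g = ∫⁻ y, Fy π ψ ρ y (g y) ∂volume := by
  exact key_repr π (Real.sqrt ρ) (fun v y => ENNReal.ofReal (ψ (g y) v))
    ((hψmeas.comp ((hg.comp measurable_snd).prodMk measurable_fst)).ennreal_ofReal)

/-- Lower semicontinuity of `Fy` in the estimate. -/
lemma Fy_lsc (π : Measure ℝ) [IsProbabilityMeasure π]
    (ψ : ℝ → ℝ → ℝ) (hψmeas : Measurable (fun q : ℝ × ℝ => ψ q.1 q.2)) (ρ : ℝ)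
    {Ψ : ℝ → ℝ} (hrepr : ∀ x y : ℝ, ψ x y = Ψ (x - y)) (hΨc : Continuous Ψ)
    (y : ℝ) {x : ℕ → ℝ} {L : ℝ} (hx : Tendsto x atTop (nhds L)) :
    Fy π ψ ρ y L ≤ liminf (fun n => Fy π ψ ρ y (x n)) atTop := by
  have hmeas : ∀ z : ℝ, Measurable (fun v : ℝ =>
      ENNReal.ofReal (ψ z v) * gaussianPDF 0 1 (y - Real.sqrt ρ * v)) := by
    intro z
    exact ((hψmeas.comp (measurable_const.prodMk measurable_id)).ennreal_ofReal).mul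
      ((measurable_gaussianPDF 0 1).comp (measurable_const.sub (measurable_id.const_mul _)))
  have hpt : ∀ v : ℝ, ENNReal.ofReal (ψ L v) * gaussianPDF 0 1 (y - Real.sqrt ρ * v)
      ≤ liminf (fun n => ENNReal.ofReal (ψ (x n) v) * gaussianPDF 0 1 (y - Real.sqrt ρ * v))
        atTop := by
    intro v
    have hcont : Tendsto (fun n => ENNReal.ofReal (ψ (x n) v)
        * gaussianPDF 0 1 (y - Real.sqrt ρ * v)) atTop
        (nhds (ENNReal.ofReal (ψ L v) * gaussianPDF 0 1 (y - Real.sqrt ρ * v))) := by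
      refine ENNReal.Tendsto.mul_const ?_ (Or.inr ENNReal.ofReal_ne_top)
      simp only [hrepr]
      exact (ENNReal.continuous_ofReal.tendsto _).comp
        ((hΨc.tendsto _).comp (hx.sub_const v))
    exact hcont.liminf_eq.symm.le
  calc Fy π ψ ρ y L
      ≤ ∫⁻ v, liminf (fun n => ENNReal.ofReal (ψ (x n) v)
          * gaussianPDF 0 1 (y - Real.sqrt ρ * v)) atTop ∂π := lintegral_mono hpt
    _ ≤ liminf (fun n => Fy π ψ ρ y (x n)) atTop := lintegral_liminf_le (fun n => hmeas (x n))

/-- Coercivity of `Fy` in the estimate. -/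
lemma Fy_coercive (π : Measure ℝ) [IsProbabilityMeasure π]
    (ψ : ℝ → ℝ → ℝ) (hψmeas : Measurable (fun q : ℝ × ℝ => ψ q.1 q.2)) {ρ : ℝ} (hρ : 0 ≤ ρ)
    {Ψ : ℝ → ℝ} (hrepr : ∀ x y : ℝ, ψ x y = Ψ (x - y))
    (htop : Tendsto Ψ atTop atTop) (hbot : Tendsto Ψ atBot atTop)
    (y : ℝ) (C : ℝ≥0∞) (hC : C ≠ ⊤) :
    ∃ B : ℝ, ∀ x : ℝ, Fy π ψ ρ y x ≤ C → |x| ≤ B := by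
  -- a compact interval with mass at least 1/2
  obtain ⟨n, hn⟩ : ∃ n : ℕ, (2: ℝ≥0∞)⁻¹ < π (Set.Icc (-(n:ℝ)) n) := by
    have hdir : Directed (· ⊆ ·) (fun n : ℕ => Set.Icc (-(n:ℝ)) n) := by
      refine Monotone.directed_le fun i j hij => ?_
      exact Set.Icc_subset_Icc (by simp [neg_le_neg, Nat.cast_le.2 hij]) (Nat.cast_le.2 hij)
    have huniv : (⋃ n : ℕ, Set.Icc (-(n:ℝ)) n) = Set.univ := by
      ext x
      simp only [Set.mem_iUnion, Set.mem_Icc, Set.mem_univ, iff_true]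
      obtain ⟨n, hn⟩ := exists_nat_ge |x|
      exact ⟨n, by cases abs_le.mp hn; constructor <;> linarith⟩
    have := Directed.measure_iUnion hdir (μ := π)
    rw [huniv, measure_univ] at this
    have h2 : (2 : ℝ≥0∞)⁻¹ < 1 := by norm_num
    rw [this] at h2
    exact lt_iSup_iff.mp h2
  set c := gaussianPDFReal 0 1 (|y| + Real.sqrt ρ * n) with hcdef
  have hcpos : 0 < c := gaussianPDFReal_pos _ _ _ one_ne_zero
  have hcbound : ∀ v ∈ Set.Icc (-(n:ℝ)) n, c ≤ gaussianPDFReal 0 1 (y - Real.sqrt ρ * v) := by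
    intro v hv
    have habs : |y - Real.sqrt ρ * v| ≤ |y| + Real.sqrt ρ * n := by
      refine (abs_sub _ _).trans ?_
      gcongr
      rw [abs_mul, abs_of_nonneg (Real.sqrt_nonneg ρ)]
      have : |v| ≤ (n : ℝ) := abs_le.mpr hv
      exact mul_le_mul_of_nonneg_left this (Real.sqrt_nonneg ρ)
    simp only [hcdef, gaussianPDFReal, sub_zero, NNReal.coe_one, mul_one]
    refine mul_le_mul_of_nonneg_left ?_ (by positivity)
    rw [Real.exp_le_exp]
    rw [div_le_div_iff_of_pos_right two_pos, neg_le_neg_iff]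
    calc (y - Real.sqrt ρ * v)^2 = |y - Real.sqrt ρ * v|^2 := (sq_abs _).symm
      _ ≤ (|y| + Real.sqrt ρ * n)^2 := by
          refine pow_le_pow_left₀ (abs_nonneg _) habs 2
  set T : ℝ := (C.toReal + 1) * 2 / c with hTdef
  have hTpos : 0 < T := by positivity
  have hCT : C < ENNReal.ofReal (T * c / 2) := by
    have h1 : T * c / 2 = C.toReal + 1 := by rw [hTdef]; field_simp
    rw [h1, ← ENNReal.ofReal_toReal hC]
    rw [ENNReal.ofReal_lt_ofReal_iff (by positivity)]
    have := ENNReal.toReal_nonneg (a := C)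
    rw [ENNReal.toReal_ofReal this]
    linarith
  obtain ⟨K₁, hK₁⟩ := eventually_atTop.mp (htop.eventually_ge_atTop T)
  obtain ⟨K₂, hK₂⟩ := eventually_atBot.mp (hbot.eventually_ge_atTop T)
  refine ⟨max (max K₁ (-K₂) + n) 0, fun x hx => ?_⟩
  by_contra hB
  push_neg at hB
  have hΨbig : ∀ v ∈ Set.Icc (-(n:ℝ)) n, T ≤ ψ x v := by
    intro v hv
    rw [hrepr]
    rcases lt_abs.mp hB with hx1 | hx1
    · refine hK₁ _ ?_
      have h2 : max K₁ (-K₂) + n < x := lt_of_le_of_lt (le_max_left _ _) hx1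
      have h3 : v ≤ n := hv.2
      have := le_max_left K₁ (-K₂)
      linarith
    · refine hK₂ _ ?_
      have h2 : max K₁ (-K₂) + n < -x := lt_of_le_of_lt (le_max_left _ _) hx1
      have h3 : -(n:ℝ) ≤ v := hv.1
      have := le_max_right K₁ (-K₂)
      linarith
  have hlow : ENNReal.ofReal (T * c) * (2 : ℝ≥0∞)⁻¹ ≤ Fy π ψ ρ y x := by
    calc ENNReal.ofReal (T * c) * (2 : ℝ≥0∞)⁻¹
        ≤ ENNReal.ofReal (T * c) * π (Set.Icc (-(n:ℝ)) n) := by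
          exact mul_le_mul_right hn.le _
      _ = ∫⁻ _v in Set.Icc (-(n:ℝ)) n, ENNReal.ofReal (T * c) ∂π := by
          rw [setLIntegral_const]
      _ ≤ ∫⁻ v in Set.Icc (-(n:ℝ)) n,
            ENNReal.ofReal (ψ x v) * gaussianPDF 0 1 (y - Real.sqrt ρ * v) ∂π := by
          refine setLIntegral_mono ?_ ?_
          · exact ((hψmeas.comp (measurable_const.prodMk measurable_id)).ennreal_ofReal).mul
              ((measurable_gaussianPDF 0 1).comp
                (measurable_const.sub (measurable_id.const_mul _)))
          · intro v hv
            rw [ENNReal.ofReal_mul hTpos.le]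
            exact mul_le_mul' (ENNReal.ofReal_le_ofReal (hΨbig v hv))
              (ENNReal.ofReal_le_ofReal (hcbound v hv))
      _ ≤ Fy π ψ ρ y x := setLIntegral_le_lintegral _ _
  have : C < Fy π ψ ρ y x := by
    refine lt_of_lt_of_le hCT (le_trans ?_ hlow)
    rw [ENNReal.ofReal_div_of_pos two_pos]
    simp only [ENNReal.ofReal_ofNat]
    rw [ENNReal.div_eq_inv_mul, mul_comm]
  exact absurd hx (not_le.mpr this)

lemma subseq_tendsto_limsup {u : ℕ → ℝ} {M : ℝ} (hM : ∀ n, |u n| ≤ M) :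
    ∃ φ : ℕ → ℕ, StrictMono φ ∧
      Tendsto (fun k => u (φ k)) atTop (nhds (limsup u atTop)) := by
  have hbdd : IsBoundedUnder (· ≤ ·) atTop u :=
    isBoundedUnder_of ⟨M, fun n => (abs_le.mp (hM n)).2⟩
  have hbdd' : IsBoundedUnder (· ≥ ·) atTop u :=
    isBoundedUnder_of ⟨-M, fun n => (abs_le.mp (hM n)).1⟩
  have hcob : IsCoboundedUnder (· ≤ ·) atTop u := hbdd'.isCoboundedUnder_le
  set L := limsup u atTop with hL
  have key : ∀ k : ℕ, ∃ᶠ n in atTop, |u n - L| < 1/(k+1) := by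
    intro k
    have hpos : (0:ℝ) < 1/(k+1) := by positivity
    have h1 : ∃ᶠ n in atTop, L - 1/(k+1) < u n :=
      frequently_lt_of_lt_limsup hcob (by linarith)
    have h2 : ∀ᶠ n in atTop, u n < L + 1/(k+1) :=
      eventually_lt_of_limsup_lt (by linarith) hbdd
    refine (h1.and_eventually h2).mono ?_
    rintro n ⟨hn1, hn2⟩
    rw [abs_sub_lt_iff]
    constructor <;> linarith
  obtain ⟨φ, hφ, hP⟩ := extraction_forall_of_frequently key
  refine ⟨φ, hφ, ?_⟩
  rw [tendsto_iff_dist_tendsto_zero]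
  have h1 : ∀ k : ℕ, dist (u (φ k)) L ≤ 1/(k+1) := fun k => by
    rw [Real.dist_eq]; exact (hP k).le
  exact squeeze_zero (fun k => dist_nonneg) h1 tendsto_one_div_add_atTop_nhds_zero_nat


lemma attain_part (π : Measure ℝ) [IsProbabilityMeasure π]
    (ψ : ℝ → ℝ → ℝ) (hψmeas : Measurable (fun q : ℝ × ℝ => ψ q.1 q.2))
    (Ψ : ℝ → ℝ) (hrepr : ∀ x y : ℝ, ψ x y = Ψ (x - y)) (hconv : ConvexOn ℝ Set.univ Ψ)
    (htop : Tendsto Ψ atTop atTop) (hbot : Tendsto Ψ atBot atTop)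
    (ρ : ℝ) (hρ : 0 ≤ ρ) :
    ∃ g : ℝ → ℝ, Measurable g ∧
      risk π ψ ρ g = ⨅ g' : {g' : ℝ → ℝ // Measurable g'}, risk π ψ ρ g'.1 := by
  classical
  set R := ⨅ g' : {g' : ℝ → ℝ // Measurable g'}, risk π ψ ρ g'.1 with hRdef
  by_cases hRtop : R = ⊤
  · exact ⟨fun _ => 0, measurable_const,
      le_antisymm (hRtop ▸ le_top) (iInf_le _ (⟨fun _ => 0, measurable_const⟩ : {g' : ℝ → ℝ // Measurable g'}))⟩
  have hΨc : Continuous Ψ := by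
    rw [← continuousOn_univ]
    exact hconv.continuousOn isOpen_univ
  have hex : ∀ n : ℕ, ∃ g' : {g' : ℝ → ℝ // Measurable g'},
      risk π ψ ρ g'.1 < R + ((n:ℝ≥0∞)+1)⁻¹ := by
    intro n
    refine iInf_lt_iff.mp ?_
    refine ENNReal.lt_add_right hRtop ?_
    simp
  choose gs hgs using hex
  set F := fun y x => Fy π ψ ρ y x with hFdef
  have hF : Measurable fun p : ℝ × ℝ => F p.1 p.2 := measurable_Fy π ψ hψmeas ρ
  let h : ℕ → ℝ → ℝ := fun n => Nat.rec (gs 0).1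
    (fun m hm => fun y => if F y ((gs (m+1)).1 y) < F y (hm y) then (gs (m+1)).1 y else hm y) n
  have hhsucc : ∀ m, h (m+1) = fun y =>
      if F y ((gs (m+1)).1 y) < F y (h m y) then (gs (m+1)).1 y else h m y := fun m => rfl
  have hmeas : ∀ n, Measurable (h n) := by
    intro n
    induction n with
    | zero => exact (gs 0).2
    | succ m ih =>
      rw [hhsucc]
      have hc : MeasurableSet {y : ℝ | F y ((gs (m+1)).1 y) < F y (h m y)} :=
        measurableSet_lt (hF.comp (measurable_id.prodMk (gs (m+1)).2))
          (hF.comp (measurable_id.prodMk ih))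
      exact Measurable.ite hc (gs (m+1)).2 ih
  have hMstep : ∀ m y, F y (h (m+1) y) ≤ F y (h m y) := by
    intro m y
    rw [hhsucc]
    dsimp only
    split_ifs with hc
    · exact hc.le
    · exact le_rfl
  have hManti : ∀ y, Antitone fun n => F y (h n y) := fun y =>
    antitone_nat_of_succ_le (fun m => hMstep m y)
  have hMle : ∀ n y, F y (h n y) ≤ F y ((gs n).1 y) := by
    intro n y
    cases n with
    | zero => exact le_rfl
    | succ m =>
      rw [hhsucc]
      dsimp only
      split_ifs with hc
      · exact le_rfl
      · exact not_lt.mp hc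
  have hMmeas : ∀ n, Measurable fun y => F y (h n y) := fun n =>
    hF.comp (measurable_id.prodMk (hmeas n))
  have hrk : ∀ n, ∫⁻ y, F y (h n y) ∂volume ≤ R + ((n:ℝ≥0∞)+1)⁻¹ := by
    intro n
    calc ∫⁻ y, F y (h n y) ∂volume ≤ ∫⁻ y, F y ((gs n).1 y) ∂volume :=
          lintegral_mono (fun y => hMle n y)
      _ = risk π ψ ρ (gs n).1 := (risk_eq π ψ hψmeas ρ (gs n).2).symm
      _ ≤ R + ((n:ℝ≥0∞)+1)⁻¹ := (hgs n).le
  have h0fin : ∫⁻ y, F y (h 0 y) ∂volume ≠ ⊤ := by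
    refine ne_top_of_le_ne_top ?_ (hrk 0)
    simp [ENNReal.add_ne_top, hRtop]
  have hMinf : ∫⁻ y, ⨅ n, F y (h n y) ∂volume ≤ R := by
    rw [lintegral_iInf hMmeas (fun i j hij y => hManti y hij) h0fin]
    refine ENNReal.le_of_forall_pos_le_add fun ε hε _ => ?_
    obtain ⟨n, hn⟩ := ENNReal.exists_inv_nat_lt
      (a := (ε : ℝ≥0∞)) (by exact_mod_cast hε.ne')
    calc (⨅ n, ∫⁻ y, F y (h n y) ∂volume) ≤ ∫⁻ y, F y (h n y) ∂volume := iInf_le _ n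
      _ ≤ R + ((n:ℝ≥0∞)+1)⁻¹ := hrk n
      _ ≤ R + (n:ℝ≥0∞)⁻¹ := by
          refine add_le_add_right (ENNReal.inv_le_inv' ?_) R
          exact le_add_right le_rfl
      _ ≤ R + ε := add_le_add_right hn.le R
  have hae : ∀ᵐ y ∂(volume : Measure ℝ), F y (h 0 y) < ⊤ := ae_lt_top (hMmeas 0) h0fin
  set L : ℝ → ℝ := fun y => limsup (fun n => h n y) atTop with hLdef
  have hLmeas : Measurable L := Measurable.limsup hmeas
  have hkey : ∀ᵐ y ∂(volume : Measure ℝ), F y (L y) ≤ ⨅ n, F y (h n y) := by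
    filter_upwards [hae] with y hy
    obtain ⟨B, hB⟩ := Fy_coercive π ψ hψmeas hρ hrepr htop hbot y (F y (h 0 y)) hy.ne
    have hbd : ∀ n, |h n y| ≤ B := fun n => hB _ (hManti y (Nat.zero_le n))
    obtain ⟨φ, hφ, hconv2⟩ := subseq_tendsto_limsup hbd
    have hlsc := Fy_lsc π ψ hψmeas ρ hrepr hΨc y (x := fun k => h (φ k) y) hconv2
    have htend : Tendsto (fun n => F y (h n y)) atTop (nhds (⨅ n, F y (h n y))) :=
      tendsto_atTop_iInf (hManti y)
    have htend2 : Tendsto (fun k => F y (h (φ k) y)) atTop (nhds (⨅ n, F y (h n y))) :=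
      htend.comp hφ.tendsto_atTop
    calc F y (L y) ≤ liminf (fun k => F y (h (φ k) y)) atTop := hlsc
      _ = ⨅ n, F y (h n y) := htend2.liminf_eq
  refine ⟨L, hLmeas, le_antisymm ?_ (iInf_le _ (⟨L, hLmeas⟩ : {g' : ℝ → ℝ // Measurable g'}))⟩
  calc risk π ψ ρ L = ∫⁻ y, F y (L y) ∂volume := risk_eq π ψ hψmeas ρ hLmeas
    _ ≤ ∫⁻ y, ⨅ n, F y (h n y) ∂volume := lintegral_mono_ae hkey
    _ ≤ R := hMinf

end BayesRiskAux

/-- **Monotonicity and attainment of the Bayes risk in the effective signal-to-noise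
ratio** (Lemma 14 / Lemma `snrmax` of the paper).  With `V ∼ π` and `G ∼ N(0,1)`
independent (realised on the product space `π ⊗ N(0,1)`), and a non-negative Borel loss
`ψ`, the Bayes risk `R_{π,ψ}(ρ) = inf_g E[ψ(g(√ρ V + G), V)]` is non-increasing in
`ρ ∈ [0,∞)`; and if `ψ(x,y) = Ψ(x−y)` for a convex `Ψ` with `Ψ(u) → ∞` as `|u| → ∞`,
then the infimum is attained for every `ρ ≥ 0`. -/
theorem bayes_risk_monotone_and_attained
    (π : Measure ℝ) [IsProbabilityMeasure π]
    (ψ : ℝ → ℝ → ℝ) (hψmeas : Measurable (fun q : ℝ × ℝ => ψ q.1 q.2))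
    (hψnonneg : ∀ x y : ℝ, 0 ≤ ψ x y) :
    (∀ ρ₁ ρ₂ : ℝ, 0 ≤ ρ₁ → ρ₁ ≤ ρ₂ →
      (⨅ g : {g : ℝ → ℝ // Measurable g},
        ∫⁻ q, ENNReal.ofReal (ψ (g.1 (Real.sqrt ρ₂ * q.1 + q.2)) q.1)
          ∂(π.prod (gaussianReal 0 1))) ≤
      ⨅ g : {g : ℝ → ℝ // Measurable g},
        ∫⁻ q, ENNReal.ofReal (ψ (g.1 (Real.sqrt ρ₁ * q.1 + q.2)) q.1)
          ∂(π.prod (gaussianReal 0 1))) ∧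
    (∀ Ψ : ℝ → ℝ, (∀ x y : ℝ, ψ x y = Ψ (x - y)) → ConvexOn ℝ Set.univ Ψ →
      Tendsto Ψ atTop atTop → Tendsto Ψ atBot atTop →
      ∀ ρ : ℝ, 0 ≤ ρ → ∃ g : ℝ → ℝ, Measurable g ∧
        (∫⁻ q, ENNReal.ofReal (ψ (g (Real.sqrt ρ * q.1 + q.2)) q.1)
          ∂(π.prod (gaussianReal 0 1))) =
        ⨅ g' : {g' : ℝ → ℝ // Measurable g'},
          ∫⁻ q, ENNReal.ofReal (ψ (g'.1 (Real.sqrt ρ * q.1 + q.2)) q.1)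
            ∂(π.prod (gaussianReal 0 1))) := by
  constructor
  · exact fun ρ₁ ρ₂ h0 h12 => BayesRiskAux.mono_part π ψ hψmeas ρ₁ ρ₂ h0 h12
  · exact fun Ψ hrepr hconv htop hbot ρ hρ =>
      BayesRiskAux.attain_part π ψ hψmeas Ψ hrepr hconv htop hbot ρ hρ
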